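/- Unconditional energy monotonicity of the scheme: under the hypotheses of the discrete energy identity (nonnegative p^m, n^m, Poisson equation at levels m and m+1, zero-Neumann ghost cells), E^{m+1} ≤ E^m for every Δt > 0; i.e., the discrete electric energy is non-increasing in m regardless of the time step size. -/

import Mathlib

open Finset

noncomputable section

/-- 5-point discrete Laplacian. -/
def dlap (dx dy : ℝ) (u : ℕ → ℕ → ℝ) (j k : ℕ) : ℝ :=
  (u (j+1) k - 2 * u j k + u (j-1) k) / dx^2 +
  (u j (k+1) - 2 * u j k + u j (k-1)) / dy^2

/-- δ_x(w δ_x u) with interface averages. -/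
def ddriftx (dx : ℝ) (w u : ℕ → ℕ → ℝ) (j k : ℕ) : ℝ :=
  ((w j k + w (j+1) k)/2 * (u (j+1) k - u j k)
    - (w (j-1) k + w j k)/2 * (u j k - u (j-1) k)) / dx^2

/-- δ_y(w δ_y u) with interface averages. -/
def ddrifty (dy : ℝ) (w u : ℕ → ℕ → ℝ) (j k : ℕ) : ℝ :=
  ((w j k + w j (k+1))/2 * (u j (k+1) - u j k)
    - (w j (k-1) + w j k)/2 * (u j k - u j (k-1))) / dy^2

/-- Zero-Neumann (reflection) ghost-cell conditions. -/
def Ghost (Nx Ny : ℕ) (f : ℕ → ℕ → ℝ) : Prop :=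
  (∀ k, f 0 k = f 1 k) ∧ (∀ k, f (Nx+1) k = f Nx k) ∧
  (∀ j, f j 0 = f j 1) ∧ (∀ j, f j (Ny+1) = f j Ny)

/-- Discrete L² inner product over interior cells. -/
def ipd (Nx Ny : ℕ) (dx dy : ℝ) (f g : ℕ → ℕ → ℝ) : ℝ :=
  ∑ j ∈ Icc 1 Nx, ∑ k ∈ Icc 1 Ny, f j k * g j k * (dx * dy)

/-- Discrete gradient norm squared ‖∇_h f‖². -/
def gradsq (Nx Ny : ℕ) (dx dy : ℝ) (f : ℕ → ℕ → ℝ) : ℝ :=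
  ∑ j ∈ Icc 1 Nx, ∑ k ∈ Icc 1 Ny,
    (((f (j+1) k - f j k)/dx)^2 + ((f j (k+1) - f j k)/dy)^2) * (dx * dy)

namespace EnergyAux

lemma tele (N : ℕ) (F : ℕ → ℝ) : ∑ j ∈ Icc 1 N, (F j - F (j-1)) = F N - F 0 := by
  induction N with
  | zero => simp
  | succ n ih =>
      rw [Finset.sum_Icc_succ_top (by omega : 1 ≤ n + 1), ih]
      simp

lemma abel1 (N : ℕ) (a g : ℕ → ℝ) (h0 : a 0 = 0) (hN : a N = 0) :
    ∑ j ∈ Icc 1 N, (a j - a (j-1)) * g j = -∑ j ∈ Icc 1 N, a j * (g (j+1) - g j) := by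
  have key : ∑ j ∈ Icc 1 N, ((a j - a (j-1)) * g j + a j * (g (j+1) - g j))
      = a N * g (N+1) - a 0 * g 1 := by
    have h1 : ∀ j ∈ Icc 1 N, (a j - a (j-1)) * g j + a j * (g (j+1) - g j)
        = (fun i => a i * g (i+1)) j - (fun i => a i * g (i+1)) (j-1) := by
      intro j hj
      obtain ⟨hj1, _⟩ := mem_Icc.mp hj
      have hji : j - 1 + 1 = j := by omega
      simp only [hji]
      ring
    rw [Finset.sum_congr rfl h1, tele N]
  rw [Finset.sum_add_distrib, h0, hN] at key
  simp at key
  linarith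

def ss (Nx Ny : ℕ) (f : ℕ → ℕ → ℝ) : ℝ := ∑ j ∈ Icc 1 Nx, ∑ k ∈ Icc 1 Ny, f j k

lemma ss_congr {Nx Ny : ℕ} {f g : ℕ → ℕ → ℝ}
    (h : ∀ j ∈ Icc 1 Nx, ∀ k ∈ Icc 1 Ny, f j k = g j k) : ss Nx Ny f = ss Nx Ny g :=
  Finset.sum_congr rfl fun j hj => Finset.sum_congr rfl fun k hk => h j hj k hk

lemma ss_add {Nx Ny : ℕ} (f g : ℕ → ℕ → ℝ) :
    ss Nx Ny (fun j k => f j k + g j k) = ss Nx Ny f + ss Nx Ny g := by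
  simp [ss, Finset.sum_add_distrib]

lemma ss_neg {Nx Ny : ℕ} (f : ℕ → ℕ → ℝ) :
    ss Nx Ny (fun j k => -(f j k)) = -ss Nx Ny f := by
  simp [ss]

lemma ss_nonneg {Nx Ny : ℕ} {f : ℕ → ℕ → ℝ}
    (h : ∀ j ∈ Icc 1 Nx, ∀ k ∈ Icc 1 Ny, 0 ≤ f j k) : 0 ≤ ss Nx Ny f :=
  Finset.sum_nonneg fun j hj => Finset.sum_nonneg fun k hk => h j hj k hk

lemma sbp_x (Nx Ny : ℕ) (a g : ℕ → ℕ → ℝ) (h0 : ∀ k, a 0 k = 0) (hN : ∀ k, a Nx k = 0) :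
    ss Nx Ny (fun j k => (a j k - a (j-1) k) * g j k)
      = -ss Nx Ny (fun j k => a j k * (g (j+1) k - g j k)) := by
  unfold ss
  calc ∑ j ∈ Icc 1 Nx, ∑ k ∈ Icc 1 Ny, (a j k - a (j-1) k) * g j k
      = ∑ k ∈ Icc 1 Ny, ∑ j ∈ Icc 1 Nx, (a j k - a (j-1) k) * g j k := Finset.sum_comm
    _ = ∑ k ∈ Icc 1 Ny, -∑ j ∈ Icc 1 Nx, a j k * (g (j+1) k - g j k) :=
        Finset.sum_congr rfl fun k _ => abel1 Nx (fun j => a j k) (fun j => g j k) (h0 k) (hN k)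
    _ = -∑ k ∈ Icc 1 Ny, ∑ j ∈ Icc 1 Nx, a j k * (g (j+1) k - g j k) := by
        rw [Finset.sum_neg_distrib]
    _ = -∑ j ∈ Icc 1 Nx, ∑ k ∈ Icc 1 Ny, a j k * (g (j+1) k - g j k) := by
        rw [Finset.sum_comm]

lemma sbp_y (Nx Ny : ℕ) (a g : ℕ → ℕ → ℝ) (h0 : ∀ j, a j 0 = 0) (hN : ∀ j, a j Ny = 0) :
    ss Nx Ny (fun j k => (a j k - a j (k-1)) * g j k)
      = -ss Nx Ny (fun j k => a j k * (g j (k+1) - g j k)) := by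
  unfold ss
  rw [← Finset.sum_neg_distrib]
  exact Finset.sum_congr rfl fun j _ =>
    abel1 Ny (fun k => a j k) (fun k => g j k) (h0 j) (hN j)


lemma sbp1_x (Nx Ny : ℕ) (f g : ℕ → ℕ → ℝ) (c : ℝ)
    (hg0 : ∀ k, g 1 k - g 0 k = 0) (hgN : ∀ k, g (Nx+1) k - g Nx k = 0) :
    ss Nx Ny (fun j k => f j k * (g (j+1) k - 2*g j k + g (j-1) k) * c)
      = -ss Nx Ny (fun j k => (g (j+1) k - g j k) * (f (j+1) k - f j k) * c) := by
  have key := sbp_x Nx Ny (fun j k => (g (j+1) k - g j k) * c) f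
    (fun k => by rw [hg0 k]; ring)
    (fun k => by rw [hgN k]; ring)
  have e1 : ss Nx Ny (fun j k => ((g (j+1) k - g j k) * c - (g (j-1+1) k - g (j-1) k) * c) * f j k)
      = ss Nx Ny (fun j k => f j k * (g (j+1) k - 2*g j k + g (j-1) k) * c) := by
    apply ss_congr; intro j hj k _
    obtain ⟨hj1, _⟩ := mem_Icc.mp hj
    have hji : j - 1 + 1 = j := by omega
    rw [hji]; ring
  have e2 : ss Nx Ny (fun j k => (g (j+1) k - g j k) * c * (f (j+1) k - f j k))
      = ss Nx Ny (fun j k => (g (j+1) k - g j k) * (f (j+1) k - f j k) * c) := by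
    apply ss_congr; intro j _ k _; ring
  rw [← e1, ← e2]; exact key

lemma sbp1_y (Nx Ny : ℕ) (f g : ℕ → ℕ → ℝ) (c : ℝ)
    (hg0 : ∀ j, g j 1 - g j 0 = 0) (hgN : ∀ j, g j (Ny+1) - g j Ny = 0) :
    ss Nx Ny (fun j k => f j k * (g j (k+1) - 2*g j k + g j (k-1)) * c)
      = -ss Nx Ny (fun j k => (g j (k+1) - g j k) * (f j (k+1) - f j k) * c) := by
  have key := sbp_y Nx Ny (fun j k => (g j (k+1) - g j k) * c) f
    (fun j => by rw [hg0 j]; ring)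
    (fun j => by rw [hgN j]; ring)
  have e1 : ss Nx Ny (fun j k => ((g j (k+1) - g j k) * c - (g j (k-1+1) - g j (k-1)) * c) * f j k)
      = ss Nx Ny (fun j k => f j k * (g j (k+1) - 2*g j k + g j (k-1)) * c) := by
    apply ss_congr; intro j _ k hk
    obtain ⟨hk1, _⟩ := mem_Icc.mp hk
    have hki : k - 1 + 1 = k := by omega
    rw [hki]; ring
  have e2 : ss Nx Ny (fun j k => (g j (k+1) - g j k) * c * (f j (k+1) - f j k))
      = ss Nx Ny (fun j k => (g j (k+1) - g j k) * (f j (k+1) - f j k) * c) := by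
    apply ss_congr; intro j _ k _; ring
  rw [← e1, ← e2]; exact key

lemma sbp2_x (Nx Ny : ℕ) (f g : ℕ → ℕ → ℝ) (c : ℝ)
    (hf0 : ∀ k, f 1 k - f 0 k = 0) (hfN : ∀ k, f (Nx+1) k - f Nx k = 0)
    (hg0 : ∀ k, g 1 k - g 0 k = 0) (hgN : ∀ k, g (Nx+1) k - g Nx k = 0) :
    ss Nx Ny (fun j k => f j k * (g (j+1) k - 2*g j k + g (j-1) k) * c)
      = ss Nx Ny (fun j k => g j k * (f (j+1) k - 2*f j k + f (j-1) k) * c) := by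
  rw [sbp1_x Nx Ny f g c hg0 hgN, sbp1_x Nx Ny g f c hf0 hfN]
  congr 1
  apply ss_congr; intro j _ k _; ring

lemma sbp2_y (Nx Ny : ℕ) (f g : ℕ → ℕ → ℝ) (c : ℝ)
    (hf0 : ∀ j, f j 1 - f j 0 = 0) (hfN : ∀ j, f j (Ny+1) - f j Ny = 0)
    (hg0 : ∀ j, g j 1 - g j 0 = 0) (hgN : ∀ j, g j (Ny+1) - g j Ny = 0) :
    ss Nx Ny (fun j k => f j k * (g j (k+1) - 2*g j k + g j (k-1)) * c)
      = ss Nx Ny (fun j k => g j k * (f j (k+1) - 2*f j k + f j (k-1)) * c) := by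
  rw [sbp1_y Nx Ny f g c hg0 hgN, sbp1_y Nx Ny g f c hf0 hfN]
  congr 1
  apply ss_congr; intro j _ k _; ring

lemma sbp_drift_x (Nx Ny : ℕ) (wt φ : ℕ → ℕ → ℝ) (c : ℝ)
    (h0 : ∀ k, φ 1 k - φ 0 k = 0) (hN : ∀ k, φ (Nx+1) k - φ Nx k = 0) :
    ss Nx Ny (fun j k => φ j k * (((wt j k + wt (j+1) k)/2 * (φ (j+1) k - φ j k)
        - (wt (j-1) k + wt j k)/2 * (φ j k - φ (j-1) k)) * c))
      = -ss Nx Ny (fun j k => (wt j k + wt (j+1) k)/2 * (φ (j+1) k - φ j k)^2 * c) := by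
  have key := sbp_x Nx Ny (fun j k => (wt j k + wt (j+1) k)/2 * (φ (j+1) k - φ j k) * c) φ
    (fun k => by rw [h0 k]; ring)
    (fun k => by rw [hN k]; ring)
  have e1 : ss Nx Ny (fun j k => ((wt j k + wt (j+1) k)/2 * (φ (j+1) k - φ j k) * c
        - (wt (j-1) k + wt (j-1+1) k)/2 * (φ (j-1+1) k - φ (j-1) k) * c) * φ j k)
      = ss Nx Ny (fun j k => φ j k * (((wt j k + wt (j+1) k)/2 * (φ (j+1) k - φ j k)
        - (wt (j-1) k + wt j k)/2 * (φ j k - φ (j-1) k)) * c)) := by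
    apply ss_congr; intro j hj k _
    obtain ⟨hj1, _⟩ := mem_Icc.mp hj
    have hji : j - 1 + 1 = j := by omega
    rw [hji]; ring
  have e2 : ss Nx Ny (fun j k => (wt j k + wt (j+1) k)/2 * (φ (j+1) k - φ j k) * c * (φ (j+1) k - φ j k))
      = ss Nx Ny (fun j k => (wt j k + wt (j+1) k)/2 * (φ (j+1) k - φ j k)^2 * c) := by
    apply ss_congr; intro j _ k _; ring
  rw [← e1, ← e2]; exact key

lemma sbp_drift_y (Nx Ny : ℕ) (wt φ : ℕ → ℕ → ℝ) (c : ℝ)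
    (h0 : ∀ j, φ j 1 - φ j 0 = 0) (hN : ∀ j, φ j (Ny+1) - φ j Ny = 0) :
    ss Nx Ny (fun j k => φ j k * (((wt j k + wt j (k+1))/2 * (φ j (k+1) - φ j k)
        - (wt j (k-1) + wt j k)/2 * (φ j k - φ j (k-1))) * c))
      = -ss Nx Ny (fun j k => (wt j k + wt j (k+1))/2 * (φ j (k+1) - φ j k)^2 * c) := by
  have key := sbp_y Nx Ny (fun j k => (wt j k + wt j (k+1))/2 * (φ j (k+1) - φ j k) * c) φ
    (fun j => by rw [h0 j]; ring)
    (fun j => by rw [hN j]; ring)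
  have e1 : ss Nx Ny (fun j k => ((wt j k + wt j (k+1))/2 * (φ j (k+1) - φ j k) * c
        - (wt j (k-1) + wt j (k-1+1))/2 * (φ j (k-1+1) - φ j (k-1)) * c) * φ j k)
      = ss Nx Ny (fun j k => φ j k * (((wt j k + wt j (k+1))/2 * (φ j (k+1) - φ j k)
        - (wt j (k-1) + wt j k)/2 * (φ j k - φ j (k-1))) * c)) := by
    apply ss_congr; intro j _ k hk
    obtain ⟨hk1, _⟩ := mem_Icc.mp hk
    have hki : k - 1 + 1 = k := by omega
    rw [hki]; ring
  have e2 : ss Nx Ny (fun j k => (wt j k + wt j (k+1))/2 * (φ j (k+1) - φ j k) * c * (φ j (k+1) - φ j k))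
      = ss Nx Ny (fun j k => (wt j k + wt j (k+1))/2 * (φ j (k+1) - φ j k)^2 * c) := by
    apply ss_congr; intro j _ k _; ring
  rw [← e1, ← e2]; exact key

end EnergyAux
open EnergyAux

/-- Unconditional energy monotonicity of the semi-implicit PNP scheme:
E^{m+1} ≤ E^m for every time step size Δt > 0. -/
theorem discrete_energy_monotone (Nx Ny : ℕ) (dx dy dt : ℝ)
    (hdx : 0 < dx) (hdy : 0 < dy) (hdt : 0 < dt)
    (p0 p1 n0 n1 φ0 φ1 : ℕ → ℕ → ℝ)
    (hgp0 : Ghost Nx Ny p0) (hgp1 : Ghost Nx Ny p1)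
    (hgn0 : Ghost Nx Ny n0) (hgn1 : Ghost Nx Ny n1)
    (hgφ0 : Ghost Nx Ny φ0) (hgφ1 : Ghost Nx Ny φ1)
    (hp0 : ∀ j k, 0 ≤ p0 j k) (hn0 : ∀ j k, 0 ≤ n0 j k)
    (hschemep : ∀ j ∈ Icc 1 Nx, ∀ k ∈ Icc 1 Ny,
      (p1 j k - p0 j k)/dt =
        dlap dx dy (fun j k => (p0 j k + p1 j k)/2) j k
        + ddriftx dx p0 (fun j k => (φ0 j k + φ1 j k)/2) j k
        + ddrifty dy p0 (fun j k => (φ0 j k + φ1 j k)/2) j k)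
    (hschemen : ∀ j ∈ Icc 1 Nx, ∀ k ∈ Icc 1 Ny,
      (n1 j k - n0 j k)/dt =
        dlap dx dy (fun j k => (n0 j k + n1 j k)/2) j k
        - ddriftx dx n0 (fun j k => (φ0 j k + φ1 j k)/2) j k
        - ddrifty dy n0 (fun j k => (φ0 j k + φ1 j k)/2) j k)
    (hpois0 : ∀ j ∈ Icc 1 Nx, ∀ k ∈ Icc 1 Ny,
      -(dlap dx dy φ0 j k) = p0 j k - n0 j k)
    (hpois1 : ∀ j ∈ Icc 1 Nx, ∀ k ∈ Icc 1 Ny,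
      -(dlap dx dy φ1 j k) = p1 j k - n1 j k) :
    gradsq Nx Ny dx dy φ1 / 2 ≤ gradsq Nx Ny dx dy φ0 / 2 := by
  classical
  obtain ⟨hp0l, hp0r, hp0b, hp0t⟩ := hgp0
  obtain ⟨hp1l, hp1r, hp1b, hp1t⟩ := hgp1
  obtain ⟨hn0l, hn0r, hn0b, hn0t⟩ := hgn0
  obtain ⟨hn1l, hn1r, hn1b, hn1t⟩ := hgn1
  obtain ⟨hf0l, hf0r, hf0b, hf0t⟩ := hgφ0
  obtain ⟨hf1l, hf1r, hf1b, hf1t⟩ := hgφ1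
  have hdxne : dx ≠ 0 := ne_of_gt hdx
  have hdyne : dy ≠ 0 := ne_of_gt hdy
  have hdtne : dt ≠ 0 := ne_of_gt hdt
  set cx : ℝ := dx*dy/dx^2 with hcx
  set cy : ℝ := dx*dy/dy^2 with hcy
  set φb : ℕ → ℕ → ℝ := fun j k => (φ0 j k + φ1 j k)/2 with hφb
  set ψ : ℕ → ℕ → ℝ := fun j k => φ1 j k - φ0 j k with hψ
  set q : ℕ → ℕ → ℝ := fun j k => (p0 j k + p1 j k)/2 - (n0 j k + n1 j k)/2 with hq
  set w : ℕ → ℕ → ℝ := fun j k => p0 j k + n0 j k with hw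
  have hφbx0 : ∀ k, φb 1 k - φb 0 k = 0 := fun k => by
    simp only [hφb]; rw [hf0l k, hf1l k]; ring
  have hφbxN : ∀ k, φb (Nx+1) k - φb Nx k = 0 := fun k => by
    simp only [hφb]; rw [hf0r k, hf1r k]; ring
  have hφby0 : ∀ j, φb j 1 - φb j 0 = 0 := fun j => by
    simp only [hφb]; rw [hf0b j, hf1b j]; ring
  have hφbyN : ∀ j, φb j (Ny+1) - φb j Ny = 0 := fun j => by
    simp only [hφb]; rw [hf0t j, hf1t j]; ring
  have hψx0 : ∀ k, ψ 1 k - ψ 0 k = 0 := fun k => by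
    simp only [hψ]; rw [hf0l k, hf1l k]; ring
  have hψxN : ∀ k, ψ (Nx+1) k - ψ Nx k = 0 := fun k => by
    simp only [hψ]; rw [hf0r k, hf1r k]; ring
  have hψy0 : ∀ j, ψ j 1 - ψ j 0 = 0 := fun j => by
    simp only [hψ]; rw [hf0b j, hf1b j]; ring
  have hψyN : ∀ j, ψ j (Ny+1) - ψ j Ny = 0 := fun j => by
    simp only [hψ]; rw [hf0t j, hf1t j]; ring
  have hqx0 : ∀ k, q 1 k - q 0 k = 0 := fun k => by
    simp only [hq]; rw [hp0l k, hp1l k, hn0l k, hn1l k]; ring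
  have hqxN : ∀ k, q (Nx+1) k - q Nx k = 0 := fun k => by
    simp only [hq]; rw [hp0r k, hp1r k, hn0r k, hn1r k]; ring
  have hqy0 : ∀ j, q j 1 - q j 0 = 0 := fun j => by
    simp only [hq]; rw [hp0b j, hp1b j, hn0b j, hn1b j]; ring
  have hqyN : ∀ j, q j (Ny+1) - q j Ny = 0 := fun j => by
    simp only [hq]; rw [hp0t j, hp1t j, hn0t j, hn1t j]; ring
  set B1x : ℝ := ss Nx Ny (fun j k => φb j k * (q (j+1) k - 2*q j k + q (j-1) k) * (2*dt*cx)) with hB1xd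
  set B1y : ℝ := ss Nx Ny (fun j k => φb j k * (q j (k+1) - 2*q j k + q j (k-1)) * (2*dt*cy)) with hB1yd
  set B2x : ℝ := ss Nx Ny (fun j k => φb j k * (((w j k + w (j+1) k)/2 * (φb (j+1) k - φb j k)
      - (w (j-1) k + w j k)/2 * (φb j k - φb (j-1) k)) * (2*dt*cx))) with hB2xd
  set B2y : ℝ := ss Nx Ny (fun j k => φb j k * (((w j k + w j (k+1))/2 * (φb j (k+1) - φb j k)
      - (w j (k-1) + w j k)/2 * (φb j k - φb j (k-1))) * (2*dt*cy))) with hB2yd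
  have master : gradsq Nx Ny dx dy φ1 - gradsq Nx Ny dx dy φ0 = B1x + B1y + B2x + B2y := by
    have m1 : gradsq Nx Ny dx dy φ1 - gradsq Nx Ny dx dy φ0
        = ss Nx Ny (fun j k => (ψ (j+1) k - ψ j k) * (φb (j+1) k - φb j k) * (2*cx)
            + (ψ j (k+1) - ψ j k) * (φb j (k+1) - φb j k) * (2*cy)) := by
      unfold gradsq ss
      rw [← Finset.sum_sub_distrib]
      refine Finset.sum_congr rfl fun j _ => ?_
      rw [← Finset.sum_sub_distrib]
      refine Finset.sum_congr rfl fun k _ => ?_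
      simp only [hψ, hφb, hcx, hcy]
      field_simp
      ring
    have m2 : ss Nx Ny (fun j k => (ψ (j+1) k - ψ j k) * (φb (j+1) k - φb j k) * (2*cx))
        = -ss Nx Ny (fun j k => φb j k * (ψ (j+1) k - 2*ψ j k + ψ (j-1) k) * (2*cx)) := by
      rw [sbp1_x Nx Ny φb ψ (2*cx) hψx0 hψxN, neg_neg]
    have m3 : ss Nx Ny (fun j k => (ψ j (k+1) - ψ j k) * (φb j (k+1) - φb j k) * (2*cy))
        = -ss Nx Ny (fun j k => φb j k * (ψ j (k+1) - 2*ψ j k + ψ j (k-1)) * (2*cy)) := by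
      rw [sbp1_y Nx Ny φb ψ (2*cy) hψy0 hψyN, neg_neg]
    rw [m1, ss_add, m2, m3]
    have m4 : -ss Nx Ny (fun j k => φb j k * (ψ (j+1) k - 2*ψ j k + ψ (j-1) k) * (2*cx))
        + -ss Nx Ny (fun j k => φb j k * (ψ j (k+1) - 2*ψ j k + ψ j (k-1)) * (2*cy))
        = ss Nx Ny (fun j k => -(φb j k * (ψ (j+1) k - 2*ψ j k + ψ (j-1) k) * (2*cx))
            + -(φb j k * (ψ j (k+1) - 2*ψ j k + ψ j (k-1)) * (2*cy))) := by
      rw [ss_add, ss_neg, ss_neg]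
    rw [m4]
    have P : ∀ j ∈ Icc 1 Nx, ∀ k ∈ Icc 1 Ny,
        -(φb j k * (ψ (j+1) k - 2*ψ j k + ψ (j-1) k) * (2*cx))
          + -(φb j k * (ψ j (k+1) - 2*ψ j k + ψ j (k-1)) * (2*cy))
        = φb j k * (q (j+1) k - 2*q j k + q (j-1) k) * (2*dt*cx)
          + φb j k * (q j (k+1) - 2*q j k + q j (k-1)) * (2*dt*cy)
          + φb j k * (((w j k + w (j+1) k)/2 * (φb (j+1) k - φb j k)
              - (w (j-1) k + w j k)/2 * (φb j k - φb (j-1) k)) * (2*dt*cx))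
          + φb j k * (((w j k + w j (k+1))/2 * (φb j (k+1) - φb j k)
              - (w j (k-1) + w j k)/2 * (φb j k - φb j (k-1))) * (2*dt*cy)) := by
      intro j hj k hk
      have e0 := hpois0 j hj k hk
      have e1 := hpois1 j hj k hk
      have ep := hschemep j hj k hk
      have en := hschemen j hj k hk
      rw [div_eq_iff hdtne] at ep en
      simp only [dlap, ddriftx, ddrifty, hφb] at e0 e1 ep en
      simp only [hψ, hφb, hq, hw, hcx, hcy]
      linear_combination (-(2*(dx*dy)*((φ0 j k + φ1 j k)/2))) * e0
        + (2*(dx*dy)*((φ0 j k + φ1 j k)/2)) * e1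
        + (2*(dx*dy)*((φ0 j k + φ1 j k)/2)) * ep
        - (2*(dx*dy)*((φ0 j k + φ1 j k)/2)) * en
    rw [ss_congr P, hB1xd, hB1yd, hB2xd, hB2yd, ss_add, ss_add, ss_add]
  have t1x : B1x = ss Nx Ny (fun j k => q j k * (φb (j+1) k - 2*φb j k + φb (j-1) k) * (2*dt*cx)) := by
    rw [hB1xd]; exact sbp2_x Nx Ny φb q (2*dt*cx) hφbx0 hφbxN hqx0 hqxN
  have t1y : B1y = ss Nx Ny (fun j k => q j k * (φb j (k+1) - 2*φb j k + φb j (k-1)) * (2*dt*cy)) := by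
    rw [hB1yd]; exact sbp2_y Nx Ny φb q (2*dt*cy) hφby0 hφbyN hqy0 hqyN
  have hB1 : B1x + B1y ≤ 0 := by
    rw [t1x, t1y, ← ss_add]
    have e : ss Nx Ny (fun j k => q j k * (φb (j+1) k - 2*φb j k + φb (j-1) k) * (2*dt*cx)
          + q j k * (φb j (k+1) - 2*φb j k + φb j (k-1)) * (2*dt*cy))
        = ss Nx Ny (fun j k => -(q j k ^ 2 * (2*dt*(dx*dy)))) := by
      apply ss_congr; intro j hj k hk
      have e0 := hpois0 j hj k hk
      have e1 := hpois1 j hj k hk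
      simp only [dlap] at e0 e1
      simp only [hq, hφb, hcx, hcy]
      linear_combination
        (-(dt*(dx*dy))*((p0 j k + p1 j k)/2 - (n0 j k + n1 j k)/2)) * e0
        + (-(dt*(dx*dy))*((p0 j k + p1 j k)/2 - (n0 j k + n1 j k)/2)) * e1
    rw [e, ss_neg, neg_nonpos]
    apply ss_nonneg
    intro j _ k _
    positivity
  have t2x : B2x = -ss Nx Ny (fun j k => (w j k + w (j+1) k)/2 * (φb (j+1) k - φb j k)^2 * (2*dt*cx)) := by
    rw [hB2xd]; exact sbp_drift_x Nx Ny w φb (2*dt*cx) hφbx0 hφbxN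
  have t2y : B2y = -ss Nx Ny (fun j k => (w j k + w j (k+1))/2 * (φb j (k+1) - φb j k)^2 * (2*dt*cy)) := by
    rw [hB2yd]; exact sbp_drift_y Nx Ny w φb (2*dt*cy) hφby0 hφbyN
  have hcx0 : (0:ℝ) ≤ 2*dt*cx := by rw [hcx]; positivity
  have hcy0 : (0:ℝ) ≤ 2*dt*cy := by rw [hcy]; positivity
  have hB2x : B2x ≤ 0 := by
    rw [t2x, neg_nonpos]
    apply ss_nonneg
    intro j _ k _
    have h1 : 0 ≤ (w j k + w (j+1) k)/2 := by
      simp only [hw]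
      have := hp0 j k; have := hn0 j k; have := hp0 (j+1) k; have := hn0 (j+1) k
      linarith
    exact mul_nonneg (mul_nonneg h1 (sq_nonneg _)) hcx0
  have hB2y : B2y ≤ 0 := by
    rw [t2y, neg_nonpos]
    apply ss_nonneg
    intro j _ k _
    have h1 : 0 ≤ (w j k + w j (k+1))/2 := by
      simp only [hw]
      have := hp0 j k; have := hn0 j k; have := hp0 j (k+1); have := hn0 j (k+1)
      linarith
    exact mul_nonneg (mul_nonneg h1 (sq_nonneg _)) hcy0
  linarith
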